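/- Let M ∈ ℝ^{(n+q)×(n+q)} be symmetric with eigendecomposition M = Q₁ Λ₊ Q₁^T + Q₂ Λ₋ Q₂^T, where [Q₁, Q₂] is orthogonal, Λ₊ ∈ ℝ^{n×n} is diagonal positive definite and Λ₋ ∈ ℝ^{q×q} is diagonal negative definite. Let H₁ ∈ ℝ^{n×n} be nonsingular and H₂ ∈ ℝ^{q×n} be such that ‖H₂ H₁^{-1}‖₂² · max λ(|Λ₋|) < min λ(Λ₊). Then the matrix Z := Q₁ H₁ + Q₂ H₂ ∈ ℝ^{(n+q)×n} satisfies that Z^T M Z is positive definite. -/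

import Mathlib

open Matrix
open scoped Matrix.Norms.L2Operator

/-- Appendix A computation: with `M = Q₁Λ₊Q₁ᵀ + Q₂Λ₋Q₂ᵀ`,
`[Q₁,Q₂]` orthogonal, `H₁` nonsingular and `‖H₂H₁⁻¹‖₂² · maxλ(|Λ₋|) < minλ(Λ₊)`,
the matrix `Z = Q₁H₁ + Q₂H₂` makes `Zᵀ M Z` positive definite. -/
theorem ZtMZ_posdef {n q : ℕ}
    (M : Matrix (Fin n ⊕ Fin q) (Fin n ⊕ Fin q) ℝ) (hM : Mᵀ = M)
    (Q₁ : Matrix (Fin n ⊕ Fin q) (Fin n) ℝ) (Q₂ : Matrix (Fin n ⊕ Fin q) (Fin q) ℝ)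
    (horth : (Matrix.fromCols Q₁ Q₂)ᵀ * Matrix.fromCols Q₁ Q₂ = 1)
    (dp : Fin n → ℝ) (hdp : ∀ i, 0 < dp i)
    (dm : Fin q → ℝ) (hdm : ∀ j, dm j < 0)
    (hdecomp : M = Q₁ * Matrix.diagonal dp * Q₁ᵀ + Q₂ * Matrix.diagonal dm * Q₂ᵀ)
    (H₁ : Matrix (Fin n) (Fin n) ℝ) (hH₁ : IsUnit H₁.det)
    (H₂ : Matrix (Fin q) (Fin n) ℝ)
    (hnorm : ∀ i j, ‖H₂ * H₁⁻¹‖ ^ 2 * |dm j| < dp i) :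
    ∀ x : Fin n → ℝ, x ≠ 0 →
      0 < x ⬝ᵥ (((Q₁ * H₁ + Q₂ * H₂)ᵀ * M * (Q₁ * H₁ + Q₂ * H₂)) *ᵥ x) := by
  intro x hx
  -- orthogonality blocks
  rw [Matrix.transpose_fromCols, Matrix.fromRows_mul_fromCols, ← Matrix.fromBlocks_one,
    Matrix.fromBlocks_inj] at horth
  obtain ⟨h11, h12, h21, h22⟩ := horth
  have e11 : ∀ {m : Type} (A : Matrix (Fin n) m ℝ), Q₁ᵀ * (Q₁ * A) = A := fun A => by
    rw [← Matrix.mul_assoc, h11, Matrix.one_mul]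
  have e12 : ∀ {m : Type} (A : Matrix (Fin q) m ℝ), Q₁ᵀ * (Q₂ * A) = 0 := fun A => by
    rw [← Matrix.mul_assoc, h12, Matrix.zero_mul]
  have e21 : ∀ {m : Type} (A : Matrix (Fin n) m ℝ), Q₂ᵀ * (Q₁ * A) = 0 := fun A => by
    rw [← Matrix.mul_assoc, h21, Matrix.zero_mul]
  have e22 : ∀ {m : Type} (A : Matrix (Fin q) m ℝ), Q₂ᵀ * (Q₂ * A) = A := fun A => by
    rw [← Matrix.mul_assoc, h22, Matrix.one_mul]
  have key : (Q₁ * H₁ + Q₂ * H₂)ᵀ * M * (Q₁ * H₁ + Q₂ * H₂)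
      = H₁ᵀ * Matrix.diagonal dp * H₁ + H₂ᵀ * Matrix.diagonal dm * H₂ := by
    subst hdecomp
    simp only [Matrix.transpose_add, Matrix.transpose_mul, Matrix.add_mul, Matrix.mul_add,
      Matrix.mul_assoc, e11, e12, e21, e22, Matrix.mul_zero, Matrix.zero_mul, Matrix.mul_one,
      add_zero, zero_add]
  rw [key]
  -- quadratic forms of diagonal congruences
  have quad : ∀ {m : Type} [Fintype m] [DecidableEq m] (A : Matrix m (Fin n) ℝ) (d : m → ℝ),
      x ⬝ᵥ ((Aᵀ * Matrix.diagonal d * A) *ᵥ x) = ∑ i, d i * (A *ᵥ x) i ^ 2 := by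
    intro m _ _ A d
    rw [← Matrix.mulVec_mulVec, ← Matrix.mulVec_mulVec, dotProduct_mulVec,
      Matrix.vecMul_transpose]
    simp only [dotProduct, Matrix.mulVec_diagonal]
    exact Finset.sum_congr rfl fun i _ => by ring
  rw [Matrix.add_mulVec, dotProduct_add, quad, quad]
  set u : Fin n → ℝ := H₁ *ᵥ x with hu_def
  set v : Fin q → ℝ := H₂ *ᵥ x with hv_def
  -- u ≠ 0
  have hu : u ≠ 0 := by
    intro h
    apply hx
    have hinj := Matrix.mulVec_injective_iff_isUnit.2 ((Matrix.isUnit_iff_isUnit_det H₁).2 hH₁)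
    exact hinj (by simpa [Matrix.mulVec_zero] using h.trans (Matrix.mulVec_zero H₁).symm)
  obtain ⟨i₂, hi₂⟩ := Function.ne_iff.1 hu
  have hSu : 0 < ∑ i, u i ^ 2 :=
    Finset.sum_pos' (fun i _ => sq_nonneg _)
      ⟨i₂, Finset.mem_univ _, by
        have h0 : u i₂ ≠ 0 := by simpa using hi₂
        positivity⟩
  -- v in terms of u
  have hv : v = (H₂ * H₁⁻¹) *ᵥ u := by
    rw [hu_def, Matrix.mulVec_mulVec, Matrix.mul_assoc, Matrix.nonsing_inv_mul H₁ hH₁,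
      Matrix.mul_one]
  -- operator norm bound: ∑ v² ≤ ‖H₂H₁⁻¹‖² ∑ u²
  set c : ℝ := ‖H₂ * H₁⁻¹‖ with hc_def
  have hSv : ∑ j, v j ^ 2 ≤ c ^ 2 * ∑ i, u i ^ 2 := by
    have h := (H₂ * H₁⁻¹).l2_opNorm_mulVec ((WithLp.equiv 2 (Fin n → ℝ)).symm u)
    rw [EuclideanSpace.norm_eq, EuclideanSpace.norm_eq] at h
    simp only [Real.norm_eq_abs, sq_abs] at h
    have hsq := mul_self_le_mul_self (Real.sqrt_nonneg _) h
    rw [Real.mul_self_sqrt (Finset.sum_nonneg fun _ _ => sq_nonneg _)] at hsq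
    rw [hv]
    calc ∑ j, ((H₂ * H₁⁻¹) *ᵥ u) j ^ 2
        ≤ (c * Real.sqrt (∑ i, u i ^ 2)) * (c * Real.sqrt (∑ i, u i ^ 2)) := hsq
      _ = c ^ 2 * ∑ i, u i ^ 2 := by
          rw [mul_mul_mul_comm, Real.mul_self_sqrt (Finset.sum_nonneg fun _ _ => sq_nonneg _)]
          ring
  -- now the final estimate
  obtain ⟨i₀, -, hi₀⟩ := Finset.exists_min_image Finset.univ dp ⟨i₂, Finset.mem_univ _⟩
  have hdpSu : dp i₀ * ∑ i, u i ^ 2 ≤ ∑ i, dp i * u i ^ 2 := by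
    rw [Finset.mul_sum]
    exact Finset.sum_le_sum fun i _ =>
      mul_le_mul_of_nonneg_right (hi₀ i (Finset.mem_univ i)) (sq_nonneg _)
  rcases isEmpty_or_nonempty (Fin q) with hq | hq
  · have : ∑ j, dm j * v j ^ 2 = 0 := by simp
    rw [this, add_zero]
    exact lt_of_lt_of_le (mul_pos (hdp i₀) hSu) hdpSu
  · obtain ⟨j₀, -, hj₀⟩ := Finset.exists_max_image Finset.univ (fun j => |dm j|)
      ⟨Classical.arbitrary (Fin q), Finset.mem_univ _⟩
    have habs : ∑ j, dm j * v j ^ 2 = -∑ j, |dm j| * v j ^ 2 := by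
      rw [← Finset.sum_neg_distrib]
      exact Finset.sum_congr rfl fun j _ => by rw [abs_of_neg (hdm j)]; ring
    have hB : ∑ j, |dm j| * v j ^ 2 ≤ |dm j₀| * ∑ j, v j ^ 2 := by
      rw [Finset.mul_sum]
      exact Finset.sum_le_sum fun j _ =>
        mul_le_mul_of_nonneg_right (hj₀ j (Finset.mem_univ j)) (sq_nonneg _)
    have hB2 : |dm j₀| * ∑ j, v j ^ 2 ≤ |dm j₀| * (c ^ 2 * ∑ i, u i ^ 2) :=
      mul_le_mul_of_nonneg_left hSv (abs_nonneg _)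
    have hlt : |dm j₀| * (c ^ 2 * ∑ i, u i ^ 2) < dp i₀ * ∑ i, u i ^ 2 := by
      have := hnorm i₀ j₀
      calc |dm j₀| * (c ^ 2 * ∑ i, u i ^ 2) = (c ^ 2 * |dm j₀|) * ∑ i, u i ^ 2 := by ring
        _ < dp i₀ * ∑ i, u i ^ 2 := by exact mul_lt_mul_of_pos_right this hSu
    rw [habs]
    have h1 : ∑ j, |dm j| * v j ^ 2 < ∑ i, dp i * u i ^ 2 :=
      lt_of_le_of_lt (hB.trans hB2) (lt_of_lt_of_le hlt hdpSu)
    linarith
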